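/- (GKST reduction.) Suppose there is a one-round, (1−η)-secure, 2-server private information retrieval scheme for n-bit databases with query size t, answer size ℓ, recovery probability 1/2 + ε, using b bits. Then there exist m ≤ 6·2^t and a map C : {0,1}^n → ({0,1}^ℓ)^m that is a (2, 3, ε−η)-smooth code using b bits. -/

import Mathlib

/-- A one-round 2-server private information retrieval scheme for `n`-bit databases
with query size `t` and answer size `ℓ`: a finite probability space `Fin R` with
weights `pr` (the user's randomness), query functions `q1, q2`, the two servers'
answer functions `ans1, ans2`, and the user's output functions `out`. -/
structure PIRScheme (n t ℓ : ℕ) where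
  R : ℕ
  pr : Fin R → ℝ
  q1 : Fin n → Fin R → Fin t → Bool
  q2 : Fin n → Fin R → Fin t → Bool
  ans1 : (Fin n → Bool) → (Fin t → Bool) → Fin ℓ → Bool
  ans2 : (Fin n → Bool) → (Fin t → Bool) → Fin ℓ → Bool
  out : Fin n → Fin R → (Fin ℓ → Bool) → (Fin ℓ → Bool) → Bool

/-- The user's randomness is a probability distribution. -/
def PIRScheme.ProbDist {n t ℓ : ℕ} (P : PIRScheme n t ℓ) : Prop :=
  (∀ r, 0 ≤ P.pr r) ∧ ∑ r, P.pr r = 1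

/-- Recovery probability at least `1/2 + ε`: for every database `x` and index `i`, the
user outputs `x_i` with probability at least `1/2 + ε`. -/
def PIRScheme.Correct {n t ℓ : ℕ} (P : PIRScheme n t ℓ) (ε : ℝ) : Prop :=
  ∀ (x : Fin n → Bool) (i : Fin n),
    1 / 2 + ε ≤
      ∑ r ∈ Finset.univ.filter
        (fun r => P.out i r (P.ans1 x (P.q1 i r)) (P.ans2 x (P.q2 i r)) = x i),
        P.pr r

/-- `(1-η)`-security: for each server, the distributions of the query induced by any
two indices `i1, i2` are within total variation distance `η`. -/
def PIRScheme.Secure {n t ℓ : ℕ} (P : PIRScheme n t ℓ) (η : ℝ) : Prop :=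
  ∀ i1 i2 : Fin n,
    (1 / 2) * ∑ q : Fin t → Bool,
      |(∑ r ∈ Finset.univ.filter (fun r => P.q1 i1 r = q), P.pr r) -
        (∑ r ∈ Finset.univ.filter (fun r => P.q1 i2 r = q), P.pr r)| ≤ η ∧
    (1 / 2) * ∑ q : Fin t → Bool,
      |(∑ r ∈ Finset.univ.filter (fun r => P.q2 i1 r = q), P.pr r) -
        (∑ r ∈ Finset.univ.filter (fun r => P.q2 i2 r = q), P.pr r)| ≤ η

/-- The scheme uses only `b` (predetermined, depending on `i` and `r`) bits of each of
the two `ℓ`-bit answers. -/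
def PIRScheme.UsesBits {n t ℓ : ℕ} (P : PIRScheme n t ℓ) (b : ℕ) : Prop :=
  ∀ (i : Fin n) (r : Fin P.R),
    ∃ S0 S1 : Finset (Fin ℓ), S0.card = b ∧ S1.card = b ∧
      ∀ a0 a1 a0' a1' : Fin ℓ → Bool,
        (∀ k ∈ S0, a0 k = a0' k) → (∀ k ∈ S1, a1 k = a1' k) →
          P.out i r a0 a1 = P.out i r a0' a1'

/-- A decoding tuple `(j0, j1, S0, S1, f)` for a 2-query decoder: two query positions,
two sets of answer bits, and an output function (taking the full `ℓ`-bit answers;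
the requirement that it only depends on the bits in `S0`/`S1` is `DecTuple.Valid`). -/
structure DecTuple (m ℓ : ℕ) where
  j0 : Fin m
  j1 : Fin m
  S0 : Finset (Fin ℓ)
  S1 : Finset (Fin ℓ)
  f : (Fin ℓ → Bool) → (Fin ℓ → Bool) → Bool
deriving DecidableEq

/-- Decoding tuples form a finite type. -/
def DecTuple.equivProd (m ℓ : ℕ) :
    (Fin m × Fin m × Finset (Fin ℓ) × Finset (Fin ℓ) ×
      ((Fin ℓ → Bool) → (Fin ℓ → Bool) → Bool)) ≃ DecTuple m ℓ where
  toFun p := ⟨p.1, p.2.1, p.2.2.1, p.2.2.2.1, p.2.2.2.2⟩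
  invFun ω := ⟨ω.j0, ω.j1, ω.S0, ω.S1, ω.f⟩
  left_inv _ := rfl
  right_inv _ := rfl

instance (m ℓ : ℕ) : Fintype (DecTuple m ℓ) :=
  Fintype.ofEquiv _ (DecTuple.equivProd m ℓ)

/-- A decoding tuple is valid for `b` used bits if the two queried positions are
distinct, the two sets have size `b`, and the output function depends only on the
answer bits in `S0` resp. `S1`. -/
def DecTuple.Valid {m ℓ : ℕ} (b : ℕ) (ω : DecTuple m ℓ) : Prop :=
  ω.j0 ≠ ω.j1 ∧ ω.S0.card = b ∧ ω.S1.card = b ∧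
    ∀ a0 a1 a0' a1' : Fin ℓ → Bool,
      (∀ k ∈ ω.S0, a0 k = a0' k) → (∀ k ∈ ω.S1, a1 k = a1' k) →
        ω.f a0 a1 = ω.f a0' a1'

/-- `D` is a distribution over decoding tuples witnessing that `C` is a
`(2, c, ε)`-smooth code using `b` bits at index `i`. -/
def IsSmoothDecoder {n m ℓ : ℕ} (b : ℕ) (c ε : ℝ)
    (C : (Fin n → Bool) → Fin m → Fin ℓ → Bool) (i : Fin n)
    (D : DecTuple m ℓ → ℝ) : Prop :=
  (∀ ω, 0 ≤ D ω) ∧ (∑ ω, D ω = 1) ∧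
  (∀ ω, D ω ≠ 0 → ω.Valid b) ∧
  (∀ x, 1 / 2 + ε ≤
    ∑ ω ∈ Finset.univ.filter
      (fun ω : DecTuple m ℓ => ω.f (C x ω.j0) (C x ω.j1) = x i), D ω) ∧
  (∀ j : Fin m,
    ∑ ω ∈ Finset.univ.filter
      (fun ω : DecTuple m ℓ => ω.j0 = j ∨ ω.j1 = j), D ω ≤ c / m)

/-- `C : {0,1}^n → ({0,1}^ℓ)^m` is a `(2, c, ε)`-smooth code using `b` bits. -/
def IsSmoothCode (n m ℓ b : ℕ) (c ε : ℝ)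
    (C : (Fin n → Bool) → Fin m → Fin ℓ → Bool) : Prop :=
  ∀ i : Fin n, ∃ D : DecTuple m ℓ → ℝ, IsSmoothDecoder b c ε C i D

open Finset

section helpers
private lemma push_sum {A Ω : Type*} [Fintype A] [DecidableEq Ω]
    (T : A → Ω) (w : A → ℝ) (s : Finset Ω) :
    ∑ ω ∈ s, (∑ a, if T a = ω then w a else 0)
      = ∑ a, if T a ∈ s then w a else 0 := by
  rw [Finset.sum_comm]
  exact Finset.sum_congr rfl fun a _ => Finset.sum_ite_eq s (T a) fun _ => w a

private lemma sum_ite_const {α : Type*} [Fintype α] (p : Prop) [Decidable p] (f : α → ℝ) :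
    ∑ a, (if p then f a else 0) = if p then (∑ a, f a) else 0 := by
  by_cases h : p <;> simp [h]

private lemma sum_ite_and {α : Type*} [Fintype α] (p : Prop) [Decidable p]
    (q : α → Prop) [DecidablePred q] (f : α → ℝ) :
    ∑ a, (if p ∧ q a then f a else 0) = if p then (∑ a, if q a then f a else 0) else 0 := by
  by_cases h : p <;> simp [h]

private lemma ite_or_le {p q : Prop} [Decidable p] [Decidable q] {x : ℝ} (hx : 0 ≤ x) :
    (if p ∨ q then x else 0) ≤ (if p then x else 0) + (if q then x else 0) := by
  by_cases hp : p <;> by_cases hq : q <;> simp [hp, hq] <;> linarith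

private lemma sigma_sum_ite {Q : Type*} [Fintype Q] [DecidableEq Q]
    (n : Q → ℕ) (hn : ∀ u, 0 < n u) (F : Q → ℝ) (q : Q) :
    ∑ s : (Σ u : Q, Fin (n u)), (if q = s.1 then F s.1 / (n s.1 : ℝ) else 0) = F q := by
  rw [← Finset.univ_sigma_univ, Finset.sum_sigma]
  have h1 : ∀ u : Q, (∑ _k : Fin (n u), if q = u then F u / (n u : ℝ) else 0)
      = if q = u then (n u : ℝ) * (F u / n u) else 0 := by
    intro u
    rw [Finset.sum_const, Finset.card_univ, Fintype.card_fin]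
    by_cases h : q = u <;> simp [h, nsmul_eq_mul]
  rw [Finset.sum_congr rfl fun u _ => h1 u, Finset.sum_ite_eq]
  simp only [Finset.mem_univ, if_true]
  rw [mul_comm, div_mul_cancel₀]
  exact Nat.cast_ne_zero.mpr (hn q).ne'

private lemma sigma_sum_div {Q : Type*} [Fintype Q]
    (n : Q → ℕ) (hn : ∀ u, 0 < n u) (F : Q → ℝ) :
    ∑ s : (Σ u : Q, Fin (n u)), F s.1 / (n s.1 : ℝ) = ∑ u, F u := by
  rw [← Finset.univ_sigma_univ, Finset.sum_sigma]
  refine Finset.sum_congr rfl fun u _ => ?_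
  dsimp only
  rw [Finset.sum_const, Finset.card_univ, Fintype.card_fin, nsmul_eq_mul, mul_comm,
    div_mul_cancel₀]
  exact Nat.cast_ne_zero.mpr (hn u).ne'

private lemma double_collapse {Q : Type*} [Fintype Q] [DecidableEq Q]
    (n1 n2 : Q → ℕ) (hn1 : ∀ u, 0 < n1 u) (hn2 : ∀ u, 0 < n2 u)
    (q1 q2 : Q) (c : ℝ) :
    ∑ s1 : (Σ u : Q, Fin (n1 u)), ∑ s2 : (Σ u : Q, Fin (n2 u)),
      (if q1 = s1.1 ∧ q2 = s2.1 then (c / (n1 s1.1 : ℝ)) / (n2 s2.1 : ℝ) else 0) = c := by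
  have inner : ∀ s1 : (Σ u : Q, Fin (n1 u)),
      (∑ s2 : (Σ u : Q, Fin (n2 u)),
        if q1 = s1.1 ∧ q2 = s2.1 then (c / (n1 s1.1 : ℝ)) / (n2 s2.1 : ℝ) else 0)
      = if q1 = s1.1 then c / (n1 s1.1 : ℝ) else 0 := by
    intro s1
    rw [sum_ite_and]
    by_cases h : q1 = s1.1
    · rw [if_pos h, if_pos h, sigma_sum_ite n2 hn2 (fun _ => c / (n1 s1.1 : ℝ)) q2]
    · rw [if_neg h, if_neg h]
  rw [Finset.sum_congr rfl fun s1 _ => inner s1]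
  exact sigma_sum_ite n1 hn1 (fun _ => c) q1


private lemma triple_collapse {R Q : Type*} [Fintype R] [Fintype Q] [DecidableEq Q]
    (n1 n2 : Q → ℕ) (hn1 : ∀ u, 0 < n1 u) (hn2 : ∀ u, 0 < n2 u)
    (q1 q2 : R → Q) (c : R → ℝ) :
    ∑ a : R × (Σ u : Q, Fin (n1 u)) × (Σ u : Q, Fin (n2 u)),
      (if q1 a.1 = a.2.1.1 ∧ q2 a.1 = a.2.2.1 then
        (c a.1 / (n1 a.2.1.1 : ℝ)) / (n2 a.2.2.1 : ℝ) else 0)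
    = ∑ r, c r := by
  rw [Fintype.sum_prod_type]
  refine Finset.sum_congr rfl fun r _ => ?_
  rw [Fintype.sum_prod_type]
  exact double_collapse n1 n2 hn1 hn2 (q1 r) (q2 r) (c r)

private lemma real_pos1 {R Q : Type*} [Fintype R] [Fintype Q] [DecidableEq Q]
    (n1 n2 : Q → ℕ) (hn1 : ∀ u, 0 < n1 u) (hn2 : ∀ u, 0 < n2 u)
    (q1 q2 : R → Q) (c : R → ℝ) (σ : Σ u : Q, Fin (n1 u)) :
    ∑ a : R × (Σ u : Q, Fin (n1 u)) × (Σ u : Q, Fin (n2 u)),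
      (if a.2.1 = σ then
        (if q1 a.1 = a.2.1.1 ∧ q2 a.1 = a.2.2.1 then
          (c a.1 / (n1 a.2.1.1 : ℝ)) / (n2 a.2.2.1 : ℝ) else 0)
       else 0)
    = (∑ r ∈ Finset.univ.filter (fun r => q1 r = σ.1), c r) / (n1 σ.1 : ℝ) := by
  rw [Fintype.sum_prod_type, Finset.sum_filter, Finset.sum_div]
  refine Finset.sum_congr rfl fun r _ => ?_
  rw [Fintype.sum_prod_type]
  have inner : ∀ s1 : Σ u : Q, Fin (n1 u),
      (∑ s2 : Σ u : Q, Fin (n2 u), if s1 = σ then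
        (if q1 r = s1.1 ∧ q2 r = s2.1 then (c r / (n1 s1.1:ℝ))/(n2 s2.1:ℝ) else 0) else 0)
      = if s1 = σ then (if q1 r = s1.1 then c r / (n1 s1.1:ℝ) else 0) else 0 := by
    intro s1
    rw [sum_ite_const]
    by_cases h : s1 = σ
    · rw [if_pos h, if_pos h, sum_ite_and]
      by_cases h2 : q1 r = s1.1
      · rw [if_pos h2, if_pos h2,
          sigma_sum_ite n2 hn2 (fun _ => c r / (n1 s1.1:ℝ)) (q2 r)]
      · rw [if_neg h2, if_neg h2]
    · rw [if_neg h, if_neg h]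
  rw [Finset.sum_congr rfl fun s1 _ => inner s1, Finset.sum_ite_eq' Finset.univ σ]
  simp only [Finset.mem_univ, if_true]
  split_ifs
  · rfl
  · rw [zero_div]

private lemma real_pos2 {R Q : Type*} [Fintype R] [Fintype Q] [DecidableEq Q]
    (n1 n2 : Q → ℕ) (hn1 : ∀ u, 0 < n1 u) (hn2 : ∀ u, 0 < n2 u)
    (q1 q2 : R → Q) (c : R → ℝ) (σ : Σ u : Q, Fin (n2 u)) :
    ∑ a : R × (Σ u : Q, Fin (n1 u)) × (Σ u : Q, Fin (n2 u)),
      (if a.2.2 = σ then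
        (if q1 a.1 = a.2.1.1 ∧ q2 a.1 = a.2.2.1 then
          (c a.1 / (n1 a.2.1.1 : ℝ)) / (n2 a.2.2.1 : ℝ) else 0)
       else 0)
    = (∑ r ∈ Finset.univ.filter (fun r => q2 r = σ.1), c r) / (n2 σ.1 : ℝ) := by
  rw [Fintype.sum_prod_type, Finset.sum_filter, Finset.sum_div]
  refine Finset.sum_congr rfl fun r _ => ?_
  rw [Fintype.sum_prod_type]
  have inner : ∀ s1 : Σ u : Q, Fin (n1 u),
      (∑ s2 : Σ u : Q, Fin (n2 u), if s2 = σ then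
        (if q1 r = s1.1 ∧ q2 r = s2.1 then (c r / (n1 s1.1:ℝ))/(n2 s2.1:ℝ) else 0) else 0)
      = if q2 r = σ.1 ∧ q1 r = s1.1 then (c r / (n2 σ.1:ℝ)) / (n1 s1.1:ℝ) else 0 := by
    intro s1
    rw [Finset.sum_ite_eq' Finset.univ σ
      (fun s2 => if q1 r = s1.1 ∧ q2 r = s2.1 then (c r / (n1 s1.1:ℝ))/(n2 s2.1:ℝ) else 0)]
    simp only [Finset.mem_univ, if_true]
    by_cases h : q1 r = s1.1 ∧ q2 r = σ.1
    · rw [if_pos h, if_pos ⟨h.2, h.1⟩, div_right_comm]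
    · rw [if_neg h, if_neg (fun hc => h ⟨hc.2, hc.1⟩)]
  rw [Finset.sum_congr rfl fun s1 _ => inner s1,
    sum_ite_and (q2 r = σ.1) (fun s1 : Σ u : Q, Fin (n1 u) => q1 r = s1.1)]
  by_cases h : q2 r = σ.1
  · rw [if_pos h, if_pos h,
      sigma_sum_ite n1 hn1 (fun _ => c r / (n2 σ.1:ℝ)) (q1 r)]
  · rw [if_neg h, if_neg h, zero_div]

private lemma dum_sum {Q : Type*} [Fintype Q]
    (n1 n2 : Q → ℕ) (hn1 : ∀ u, 0 < n1 u) (hn2 : ∀ u, 0 < n2 u) (F1 F2 : Q → ℝ) :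
    ∑ a : (Σ u : Q, Fin (n1 u)) × (Σ u : Q, Fin (n2 u)) × Bool,
      (F1 a.1.1 / (n1 a.1.1 : ℝ)) * (F2 a.2.1.1 / (n2 a.2.1.1 : ℝ))
    = (∑ u, F1 u) * (2 * ∑ u, F2 u) := by
  rw [Fintype.sum_prod_type]
  have step : ∀ s1 : Σ u : Q, Fin (n1 u),
      (∑ p : (Σ u : Q, Fin (n2 u)) × Bool,
        (F1 s1.1 / (n1 s1.1 : ℝ)) * (F2 p.1.1 / (n2 p.1.1 : ℝ)))
      = (F1 s1.1 / (n1 s1.1 : ℝ)) * (2 * ∑ u, F2 u) := by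
    intro s1
    rw [← Finset.mul_sum, Fintype.sum_prod_type]
    congr 1
    have : ∀ s2 : Σ u : Q, Fin (n2 u),
        (∑ _c : Bool, F2 s2.1 / (n2 s2.1 : ℝ)) = 2 * (F2 s2.1 / (n2 s2.1 : ℝ)) := by
      intro s2; rw [Fintype.sum_bool]; ring
    rw [Finset.sum_congr rfl fun s2 _ => this s2, ← Finset.mul_sum,
      sigma_sum_div n2 hn2 F2]
  rw [Finset.sum_congr rfl fun s1 _ => step s1, ← Finset.sum_mul,
    sigma_sum_div n1 hn1 F1]

private lemma dum_correct {Q : Type*} [Fintype Q]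
    (n1 n2 : Q → ℕ) (hn1 : ∀ u, 0 < n1 u) (hn2 : ∀ u, 0 < n2 u) (F1 F2 : Q → ℝ)
    (c0 : Bool) :
    ∑ a : (Σ u : Q, Fin (n1 u)) × (Σ u : Q, Fin (n2 u)) × Bool,
      (if a.2.2 = c0 then (F1 a.1.1 / (n1 a.1.1 : ℝ)) * (F2 a.2.1.1 / (n2 a.2.1.1 : ℝ)) else 0)
    = (∑ u, F1 u) * (∑ u, F2 u) := by
  rw [Fintype.sum_prod_type]
  have step : ∀ s1 : Σ u : Q, Fin (n1 u),
      (∑ p : (Σ u : Q, Fin (n2 u)) × Bool,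
        if p.2 = c0 then (F1 s1.1 / (n1 s1.1 : ℝ)) * (F2 p.1.1 / (n2 p.1.1 : ℝ)) else 0)
      = (F1 s1.1 / (n1 s1.1 : ℝ)) * (∑ u, F2 u) := by
    intro s1
    rw [Fintype.sum_prod_type]
    have : ∀ s2 : Σ u : Q, Fin (n2 u),
        (∑ c : Bool, if c = c0 then
          (F1 s1.1 / (n1 s1.1 : ℝ)) * (F2 s2.1 / (n2 s2.1 : ℝ)) else 0)
        = (F1 s1.1 / (n1 s1.1 : ℝ)) * (F2 s2.1 / (n2 s2.1 : ℝ)) := by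
      intro s2
      rw [Finset.sum_ite_eq' Finset.univ c0
        (fun _ => (F1 s1.1 / (n1 s1.1 : ℝ)) * (F2 s2.1 / (n2 s2.1 : ℝ)))]
      simp
    rw [Finset.sum_congr rfl fun s2 _ => this s2, ← Finset.mul_sum,
      sigma_sum_div n2 hn2 F2]
  rw [Finset.sum_congr rfl fun s1 _ => step s1, ← Finset.sum_mul,
    sigma_sum_div n1 hn1 F1]

private lemma dum_pos1 {Q : Type*} [Fintype Q] [DecidableEq Q]
    (n1 n2 : Q → ℕ) (hn1 : ∀ u, 0 < n1 u) (hn2 : ∀ u, 0 < n2 u) (F1 F2 : Q → ℝ)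
    (σ : Σ u : Q, Fin (n1 u)) :
    ∑ a : (Σ u : Q, Fin (n1 u)) × (Σ u : Q, Fin (n2 u)) × Bool,
      (if a.1 = σ then (F1 a.1.1 / (n1 a.1.1 : ℝ)) * (F2 a.2.1.1 / (n2 a.2.1.1 : ℝ)) else 0)
    = (F1 σ.1 / (n1 σ.1 : ℝ)) * (2 * ∑ u, F2 u) := by
  classical
  rw [Fintype.sum_prod_type]
  have step : ∀ s1 : Σ u : Q, Fin (n1 u),
      (∑ p : (Σ u : Q, Fin (n2 u)) × Bool,
        if s1 = σ then (F1 s1.1 / (n1 s1.1 : ℝ)) * (F2 p.1.1 / (n2 p.1.1 : ℝ)) else 0)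
      = if s1 = σ then (F1 s1.1 / (n1 s1.1 : ℝ)) * (2 * ∑ u, F2 u) else 0 := by
    intro s1
    rw [sum_ite_const]
    by_cases h : s1 = σ
    · rw [if_pos h, if_pos h]
      congr 1
      rw [← Finset.mul_sum, Fintype.sum_prod_type]
      congr 1
      have : ∀ s2 : Σ u : Q, Fin (n2 u),
          (∑ _c : Bool, F2 s2.1 / (n2 s2.1 : ℝ)) = 2 * (F2 s2.1 / (n2 s2.1 : ℝ)) := by
        intro s2; rw [Fintype.sum_bool]; ring
      rw [Finset.sum_congr rfl fun s2 _ => this s2, ← Finset.mul_sum,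
        sigma_sum_div n2 hn2 F2]
    · rw [if_neg h, if_neg h]
  rw [Finset.sum_congr rfl fun s1 _ => step s1, Finset.sum_ite_eq' Finset.univ σ]
  simp

private lemma dum_pos2 {Q : Type*} [Fintype Q] [DecidableEq Q]
    (n1 n2 : Q → ℕ) (hn1 : ∀ u, 0 < n1 u) (hn2 : ∀ u, 0 < n2 u) (F1 F2 : Q → ℝ)
    (σ : Σ u : Q, Fin (n2 u)) :
    ∑ a : (Σ u : Q, Fin (n1 u)) × (Σ u : Q, Fin (n2 u)) × Bool,
      (if a.2.1 = σ then (F1 a.1.1 / (n1 a.1.1 : ℝ)) * (F2 a.2.1.1 / (n2 a.2.1.1 : ℝ)) else 0)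
    = (∑ u, F1 u) * (2 * (F2 σ.1 / (n2 σ.1 : ℝ))) := by
  classical
  rw [Fintype.sum_prod_type]
  have step : ∀ s1 : Σ u : Q, Fin (n1 u),
      (∑ p : (Σ u : Q, Fin (n2 u)) × Bool,
        if p.1 = σ then (F1 s1.1 / (n1 s1.1 : ℝ)) * (F2 p.1.1 / (n2 p.1.1 : ℝ)) else 0)
      = (F1 s1.1 / (n1 s1.1 : ℝ)) * (2 * (F2 σ.1 / (n2 σ.1 : ℝ))) := by
    intro s1
    rw [Fintype.sum_prod_type]
    have : ∀ s2 : Σ u : Q, Fin (n2 u),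
        (∑ _c : Bool, if s2 = σ then
          (F1 s1.1 / (n1 s1.1 : ℝ)) * (F2 s2.1 / (n2 s2.1 : ℝ)) else 0)
        = if s2 = σ then 2 * ((F1 s1.1 / (n1 s1.1 : ℝ)) * (F2 s2.1 / (n2 s2.1 : ℝ))) else 0 := by
      intro s2
      by_cases h : s2 = σ
      · simp only [if_pos h, Fintype.sum_bool]; ring
      · simp only [if_neg h, Fintype.sum_bool]; ring
    rw [Finset.sum_congr rfl fun s2 _ => this s2, Finset.sum_ite_eq' Finset.univ σ]
    simp only [Finset.mem_univ, if_true]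
    ring
  rw [Finset.sum_congr rfl fun s1 _ => step s1, ← Finset.sum_mul,
    sigma_sum_div n1 hn1 F1]

private lemma cap_bound {Q : Type*} [Fintype Q]
    (p pi c : Q → ℝ) (η : ℝ)
    (hsum : ∑ u, pi u = ∑ u, p u)
    (hpc : ∀ u, p u ≤ c u)
    (htv : 1/2 * ∑ u, |pi u - p u| ≤ η) :
    ∑ u, (pi u - min (pi u) (c u)) ≤ η := by
  have key : ∀ u, pi u - min (pi u) (c u) ≤ ((pi u - p u) + |pi u - p u|) / 2 := by
    intro u
    rcases le_total (pi u) (c u) with h | h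
    · rw [min_eq_left h]
      have h1 := abs_nonneg (pi u - p u); have h2 := neg_abs_le (pi u - p u); linarith
    · rw [min_eq_right h]
      have h2 := hpc u
      have h3 := le_abs_self (pi u - p u); linarith
  calc ∑ u, (pi u - min (pi u) (c u)) ≤ ∑ u, ((pi u - p u) + |pi u - p u|)/2 :=
        Finset.sum_le_sum fun u _ => key u
    _ = ((∑ u, pi u - ∑ u, p u) + ∑ u, |pi u - p u|)/2 := by
        rw [← Finset.sum_div, Finset.sum_add_distrib, Finset.sum_sub_distrib]
    _ = 1/2 * ∑ u, |pi u - p u| := by rw [hsum]; ring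
    _ ≤ η := htv

private lemma fiber_sum {R Q : Type*} [Fintype R] [Fintype Q] [DecidableEq Q]
    (f : R → Q) (G : R → ℝ) (F : Q → ℝ) :
    ∑ u, (∑ r ∈ Finset.univ.filter (fun r => f r = u), G r) * F u = ∑ r, G r * F (f r) := by
  rw [← Finset.sum_fiberwise Finset.univ (fun r => f r) (fun r => G r * F (f r))]
  refine Finset.sum_congr rfl fun u _ => ?_
  rw [Finset.sum_mul]
  refine Finset.sum_congr rfl fun r hr => ?_
  rw [(Finset.mem_filter.mp hr).2]
end helpers

set_option maxHeartbeats 2000000 in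
private lemma decoder_exists
    {n t ℓ b : ℕ} (P : PIRScheme n t ℓ) (η ε : ℝ)
    (hpr0 : ∀ r, 0 ≤ P.pr r) (hpr1 : ∑ r, P.pr r = 1)
    (i : Fin n) (m : ℕ)
    (hm3 : (m : ℝ) ≤ 3 * 2 ^ (t + 1))
    (n1 n2 : (Fin t → Bool) → ℕ) (hn1 : ∀ u, 0 < n1 u) (hn2 : ∀ u, 0 < n2 u)
    (hbig1 : (m : ℝ) ≤ 3 * ∑ u, (n1 u : ℝ))
    (hbig2 : (m : ℝ) ≤ 3 * ∑ u, (n2 u : ℝ))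
    (e : ((Σ u : Fin t → Bool, Fin (n1 u)) ⊕ (Σ u : Fin t → Bool, Fin (n2 u))) ≃ Fin m)
    (C : (Fin n → Bool) → Fin m → Fin ℓ → Bool)
    (hC1 : ∀ x s, C x (e (Sum.inl s)) = P.ans1 x s.1)
    (hC2 : ∀ x s, C x (e (Sum.inr s)) = P.ans2 x s.1)
    (p1 p2 : (Fin t → Bool) → ℝ)
    (hp1sum : ∑ u, p1 u = 1) (hp2sum : ∑ u, p2 u = 1)
    (hcap1 : ∀ u, p1 u ≤ (n1 u : ℝ) * (3 / m))
    (hcap2 : ∀ u, p2 u ≤ (n2 u : ℝ) * (3 / m))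
    (htv1 : 1/2 * ∑ u, |(∑ r ∈ Finset.univ.filter (fun r => P.q1 i r = u), P.pr r) - p1 u| ≤ η)
    (htv2 : 1/2 * ∑ u, |(∑ r ∈ Finset.univ.filter (fun r => P.q2 i r = u), P.pr r) - p2 u| ≤ η)
    (hcor : ∀ x : Fin n → Bool, 1 / 2 + ε ≤
      ∑ r ∈ Finset.univ.filter
        (fun r => P.out i r (P.ans1 x (P.q1 i r)) (P.ans2 x (P.q2 i r)) = x i), P.pr r)
    (S0f S1f : Fin P.R → Finset (Fin ℓ))
    (hS0 : ∀ r, (S0f r).card = b) (hS1 : ∀ r, (S1f r).card = b)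
    (hout : ∀ r (a0 a1 a0' a1' : Fin ℓ → Bool), (∀ k ∈ S0f r, a0 k = a0' k) →
      (∀ k ∈ S1f r, a1 k = a1' k) → P.out i r a0 a1 = P.out i r a0' a1')
    (Sd0 Sd1 : Finset (Fin ℓ)) (hd0 : Sd0.card = b) (hd1 : Sd1.card = b) :
    ∃ D : DecTuple m ℓ → ℝ, IsSmoothDecoder b 3 (ε - η) C i D := by
  classical
  have hm0 : 0 < m := (e (Sum.inl ⟨default, ⟨0, hn1 default⟩⟩)).pos
  have hm0' : (0:ℝ) < m := by exact_mod_cast hm0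
  -- query distributions of index i
  set pi1 : (Fin t → Bool) → ℝ :=
    fun u => ∑ r ∈ Finset.univ.filter (fun r => P.q1 i r = u), P.pr r with hpi1def
  set pi2 : (Fin t → Bool) → ℝ :=
    fun u => ∑ r ∈ Finset.univ.filter (fun r => P.q2 i r = u), P.pr r with hpi2def
  have hpi1_0 : ∀ u, 0 ≤ pi1 u := fun u => Finset.sum_nonneg fun r _ => hpr0 r
  have hpi2_0 : ∀ u, 0 ≤ pi2 u := fun u => Finset.sum_nonneg fun r _ => hpr0 r
  have hpi1sum : ∑ u, pi1 u = 1 := by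
    have := fiber_sum (fun r => P.q1 i r) P.pr (fun _ => (1:ℝ))
    simpa [hpi1def] using this.trans (by simpa using hpr1)
  have hpi2sum : ∑ u, pi2 u = 1 := by
    have := fiber_sum (fun r => P.q2 i r) P.pr (fun _ => (1:ℝ))
    simpa [hpi2def] using this.trans (by simpa using hpr1)
  -- caps
  set c1 : (Fin t → Bool) → ℝ := fun u => (n1 u : ℝ) * (3 / m) with hc1def
  set c2 : (Fin t → Bool) → ℝ := fun u => (n2 u : ℝ) * (3 / m) with hc2def
  have hc1_0 : ∀ u, 0 ≤ c1 u := fun u => by positivity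
  have hc2_0 : ∀ u, 0 ≤ c2 u := fun u => by positivity
  -- thinning factors
  set g1 : (Fin t → Bool) → ℝ := fun u => if pi1 u ≤ c1 u then 1 else c1 u / pi1 u with hg1def
  set g2 : (Fin t → Bool) → ℝ := fun u => if pi2 u ≤ c2 u then 1 else c2 u / pi2 u with hg2def
  have hg1_01 : ∀ u, 0 ≤ g1 u ∧ g1 u ≤ 1 := by
    intro u; simp only [hg1def]
    split_ifs with h
    · exact ⟨zero_le_one, le_refl 1⟩
    · push_neg at h
      have hpi : 0 < pi1 u := lt_of_le_of_lt (hc1_0 u) h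
      exact ⟨div_nonneg (hc1_0 u) hpi.le, (div_le_one hpi).mpr h.le⟩
  have hg2_01 : ∀ u, 0 ≤ g2 u ∧ g2 u ≤ 1 := by
    intro u; simp only [hg2def]
    split_ifs with h
    · exact ⟨zero_le_one, le_refl 1⟩
    · push_neg at h
      have hpi : 0 < pi2 u := lt_of_le_of_lt (hc2_0 u) h
      exact ⟨div_nonneg (hc2_0 u) hpi.le, (div_le_one hpi).mpr h.le⟩
  have hg1mul : ∀ u, pi1 u * g1 u = min (pi1 u) (c1 u) := by
    intro u; simp only [hg1def]
    split_ifs with h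
    · rw [mul_one, min_eq_left h]
    · push_neg at h
      have hpi : 0 < pi1 u := lt_of_le_of_lt (hc1_0 u) h
      rw [mul_div_cancel₀ _ hpi.ne', min_eq_right h.le]
  have hg2mul : ∀ u, pi2 u * g2 u = min (pi2 u) (c2 u) := by
    intro u; simp only [hg2def]
    split_ifs with h
    · rw [mul_one, min_eq_left h]
    · push_neg at h
      have hpi : 0 < pi2 u := lt_of_le_of_lt (hc2_0 u) h
      rw [mul_div_cancel₀ _ hpi.ne', min_eq_right h.le]
  set κ : Fin P.R → ℝ := fun r => g1 (P.q1 i r) * g2 (P.q2 i r) with hκdef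
  have hκ01 : ∀ r, 0 ≤ κ r ∧ κ r ≤ 1 := by
    intro r
    constructor
    · exact mul_nonneg (hg1_01 _).1 (hg2_01 _).1
    · exact mul_le_one₀ (hg1_01 _).2 (hg2_01 _).1 (hg2_01 _).2
  set K : ℝ := ∑ r, P.pr r * κ r with hKdef
  set ρ : ℝ := 1 - K with hρdef
  have hK1 : K ≤ 1 := by
    rw [hKdef, ← hpr1]
    exact Finset.sum_le_sum fun r _ => by
      nlinarith [hpr0 r, (hκ01 r).2, (hκ01 r).1]
  have hK0 : 0 ≤ K :=
    Finset.sum_nonneg fun r _ => mul_nonneg (hpr0 r) (hκ01 r).1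
  have hρ0 : 0 ≤ ρ := by simp only [hρdef]; linarith
  -- ρ ≤ 2η
  have hA1 : ∑ u, (pi1 u - min (pi1 u) (c1 u)) ≤ η :=
    cap_bound p1 pi1 c1 η (hpi1sum.trans hp1sum.symm) hcap1 htv1
  have hA2 : ∑ u, (pi2 u - min (pi2 u) (c2 u)) ≤ η :=
    cap_bound p2 pi2 c2 η (hpi2sum.trans hp2sum.symm) hcap2 htv2
  have hρ2η : ρ ≤ 2 * η := by
    have e1 : ρ = ∑ r, P.pr r * (1 - κ r) := by
      simp only [hρdef, hKdef, mul_sub, mul_one, Finset.sum_sub_distrib, hpr1]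
    have e2 : ∀ r, P.pr r * (1 - κ r) ≤
        P.pr r * (1 - g1 (P.q1 i r)) + P.pr r * (1 - g2 (P.q2 i r)) := by
      intro r
      have h1 := (hg1_01 (P.q1 i r)); have h2 := (hg2_01 (P.q2 i r))
      have : (1 - g1 (P.q1 i r)) * (1 - g2 (P.q2 i r)) ≥ 0 :=
        mul_nonneg (by linarith [h1.2]) (by linarith [h2.2])
      have hκr : κ r = g1 (P.q1 i r) * g2 (P.q2 i r) := rfl
      nlinarith [hpr0 r]
    have e3 : ∑ r, (P.pr r * (1 - g1 (P.q1 i r)) + P.pr r * (1 - g2 (P.q2 i r)))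
        = ∑ u, pi1 u * (1 - g1 u) + ∑ u, pi2 u * (1 - g2 u) := by
      rw [Finset.sum_add_distrib,
        ← fiber_sum (fun r => P.q1 i r) P.pr (fun u => 1 - g1 u),
        ← fiber_sum (fun r => P.q2 i r) P.pr (fun u => 1 - g2 u)]
    have e4 : ∑ u, pi1 u * (1 - g1 u) = ∑ u, (pi1 u - min (pi1 u) (c1 u)) := by
      refine Finset.sum_congr rfl fun u _ => ?_
      rw [mul_sub, mul_one, hg1mul u]
    have e5 : ∑ u, pi2 u * (1 - g2 u) = ∑ u, (pi2 u - min (pi2 u) (c2 u)) := by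
      refine Finset.sum_congr rfl fun u _ => ?_
      rw [mul_sub, mul_one, hg2mul u]
    calc ρ = ∑ r, P.pr r * (1 - κ r) := e1
      _ ≤ ∑ r, (P.pr r * (1 - g1 (P.q1 i r)) + P.pr r * (1 - g2 (P.q2 i r))) :=
          Finset.sum_le_sum fun r _ => e2 r
      _ = ∑ u, pi1 u * (1 - g1 u) + ∑ u, pi2 u * (1 - g2 u) := e3
      _ ≤ η + η := by rw [e4, e5]; exact add_le_add hA1 hA2
      _ = 2 * η := by ring
  -- kept marginals and rooms
  set M1 : (Fin t → Bool) → ℝ :=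
    fun u => ∑ r ∈ Finset.univ.filter (fun r => P.q1 i r = u), P.pr r * κ r with hM1def
  set M2 : (Fin t → Bool) → ℝ :=
    fun u => ∑ r ∈ Finset.univ.filter (fun r => P.q2 i r = u), P.pr r * κ r with hM2def
  have hM1sum : ∑ u, M1 u = K :=
    Finset.sum_fiberwise Finset.univ (fun r => P.q1 i r) (fun r => P.pr r * κ r)
  have hM2sum : ∑ u, M2 u = K :=
    Finset.sum_fiberwise Finset.univ (fun r => P.q2 i r) (fun r => P.pr r * κ r)
  have hM1_0 : ∀ u, 0 ≤ M1 u :=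
    fun u => Finset.sum_nonneg fun r _ => mul_nonneg (hpr0 r) (hκ01 r).1
  have hM2_0 : ∀ u, 0 ≤ M2 u :=
    fun u => Finset.sum_nonneg fun r _ => mul_nonneg (hpr0 r) (hκ01 r).1
  have hM1le : ∀ u, M1 u ≤ c1 u := by
    intro u
    have h1 : M1 u ≤ pi1 u * g1 u := by
      rw [hM1def, hpi1def]
      simp only
      rw [Finset.sum_mul]
      refine Finset.sum_le_sum fun r hr => ?_
      have hq : P.q1 i r = u := (Finset.mem_filter.mp hr).2
      have hk : κ r = g1 u * g2 (P.q2 i r) := by rw [hκdef]; simp only; rw [hq]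
      rw [hk, ← mul_assoc]
      exact mul_le_of_le_one_right (mul_nonneg (hpr0 r) (hg1_01 u).1) (hg2_01 _).2
    rw [hg1mul u] at h1
    exact h1.trans (min_le_right _ _)
  have hM2le : ∀ u, M2 u ≤ c2 u := by
    intro u
    have h1 : M2 u ≤ pi2 u * g2 u := by
      rw [hM2def, hpi2def]
      simp only
      rw [Finset.sum_mul]
      refine Finset.sum_le_sum fun r hr => ?_
      have hq : P.q2 i r = u := (Finset.mem_filter.mp hr).2
      have hk : κ r = g1 (P.q1 i r) * g2 u := by rw [hκdef]; simp only; rw [hq]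
      rw [hk, mul_comm (g1 (P.q1 i r)), ← mul_assoc]
      exact mul_le_of_le_one_right (mul_nonneg (hpr0 r) (hg2_01 u).1) (hg1_01 _).2
    rw [hg2mul u] at h1
    exact h1.trans (min_le_right _ _)
  set room1 : (Fin t → Bool) → ℝ := fun u => c1 u - M1 u with hroom1def
  set room2 : (Fin t → Bool) → ℝ := fun u => c2 u - M2 u with hroom2def
  have hroom1_0 : ∀ u, 0 ≤ room1 u := fun u => by
    simp only [hroom1def]; linarith [hM1le u]
  have hroom2_0 : ∀ u, 0 ≤ room2 u := fun u => by
    simp only [hroom2def]; linarith [hM2le u]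
  set R1 : ℝ := ∑ u, room1 u with hR1def
  set R2 : ℝ := ∑ u, room2 u with hR2def
  have hc1sum : ∑ u, c1 u = (3 / m) * ∑ u, (n1 u : ℝ) := by
    rw [hc1def, Finset.mul_sum]
    exact Finset.sum_congr rfl fun u _ => by ring
  have hc2sum : ∑ u, c2 u = (3 / m) * ∑ u, (n2 u : ℝ) := by
    rw [hc2def, Finset.mul_sum]
    exact Finset.sum_congr rfl fun u _ => by ring
  have hR1ρ : ρ ≤ R1 := by
    have h1 : R1 = (3 / m) * ∑ u, (n1 u : ℝ) - K := by
      rw [hR1def, hroom1def]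
      rw [Finset.sum_sub_distrib, hc1sum, hM1sum]
    have h2 : (1:ℝ) ≤ (3 / m) * ∑ u, (n1 u : ℝ) := by
      rw [div_mul_eq_mul_div, le_div_iff₀ hm0', one_mul]
      linarith
    simp only [hρdef]; linarith
  have hR2ρ : ρ ≤ R2 := by
    have h1 : R2 = (3 / m) * ∑ u, (n2 u : ℝ) - K := by
      rw [hR2def, hroom2def]
      rw [Finset.sum_sub_distrib, hc2sum, hM2sum]
    have h2 : (1:ℝ) ≤ (3 / m) * ∑ u, (n2 u : ℝ) := by
      rw [div_mul_eq_mul_div, le_div_iff₀ hm0', one_mul]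
      linarith
    simp only [hρdef]; linarith
  have hR1_0 : 0 ≤ R1 := le_trans hρ0 hR1ρ
  have hR2_0 : 0 ≤ R2 := le_trans hρ0 hR2ρ
  have hfix : ∀ x : ℝ, x * ρ * (R1 / R1) * (R2 / R2) = x * ρ := by
    intro x
    rcases eq_or_lt_of_le hρ0 with h | h
    · rw [← h]; ring
    · rw [div_self (by linarith : R1 ≠ 0), div_self (by linarith : R2 ≠ 0)]; ring
  -- the atoms
  set Treal : (Fin P.R × (Σ u : Fin t → Bool, Fin (n1 u)) × (Σ u : Fin t → Bool, Fin (n2 u)))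
      → DecTuple m ℓ :=
    fun a => ⟨e (Sum.inl a.2.1), e (Sum.inr a.2.2), S0f a.1, S1f a.1, P.out i a.1⟩ with hTreal
  set wreal : (Fin P.R × (Σ u : Fin t → Bool, Fin (n1 u)) × (Σ u : Fin t → Bool, Fin (n2 u)))
      → ℝ :=
    fun a => if P.q1 i a.1 = a.2.1.1 ∧ P.q2 i a.1 = a.2.2.1 then
      (P.pr a.1 * κ a.1 / (n1 a.2.1.1 : ℝ)) / (n2 a.2.2.1 : ℝ) else 0 with hwreal
  set Tdum : ((Σ u : Fin t → Bool, Fin (n1 u)) × (Σ u : Fin t → Bool, Fin (n2 u)) × Bool)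
      → DecTuple m ℓ :=
    fun a => ⟨e (Sum.inl a.1), e (Sum.inr a.2.1), Sd0, Sd1, fun _ _ => a.2.2⟩ with hTdum
  set wdum : ((Σ u : Fin t → Bool, Fin (n1 u)) × (Σ u : Fin t → Bool, Fin (n2 u)) × Bool)
      → ℝ :=
    fun a => ((ρ/2) * (room1 a.1.1 / R1) / (n1 a.1.1 : ℝ))
      * ((room2 a.2.1.1 / R2) / (n2 a.2.1.1 : ℝ)) with hwdum
  have hwreal0 : ∀ a, 0 ≤ wreal a := by
    intro a
    simp only [hwreal]
    split_ifs with h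
    · have := mul_nonneg (hpr0 a.1) (hκ01 a.1).1
      positivity
    · exact le_rfl
  have hwdum0 : ∀ a, 0 ≤ wdum a := by
    intro a
    simp only [hwdum]
    have h1 := hroom1_0 a.1.1
    have h2 := hroom2_0 a.2.1.1
    positivity
  -- helper sums
  have hs1 : ∑ u, (ρ/2) * (room1 u / R1) = (ρ/2) * (R1/R1) := by
    rw [← Finset.mul_sum, ← Finset.sum_div, ← hR1def]
  have hs2 : ∑ u, room2 u / R2 = R2/R2 := by
    rw [← Finset.sum_div, ← hR2def]
  -- total sums
  have hrealtotal : ∑ a, wreal a = K := by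
    rw [hwreal, hKdef]
    exact triple_collapse n1 n2 hn1 hn2 (fun r => P.q1 i r) (fun r => P.q2 i r)
      (fun r => P.pr r * κ r)
  have hdumtotal : ∑ a, wdum a = ρ := by
    calc ∑ a, wdum a
        = (∑ u, (ρ/2) * (room1 u / R1)) * (2 * ∑ u, room2 u / R2) := by
          rw [hwdum]
          exact dum_sum n1 n2 hn1 hn2 (fun u => (ρ/2) * (room1 u / R1))
            (fun u => room2 u / R2)
      _ = ((ρ/2) * (R1/R1)) * (2 * (R2/R2)) := by rw [hs1, hs2]
      _ = 1 * ρ * (R1/R1) * (R2/R2) := by ring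
      _ = ρ := by rw [hfix 1, one_mul]
  refine ⟨fun ω => (∑ a, if Treal a = ω then wreal a else 0)
    + (∑ a, if Tdum a = ω then wdum a else 0), ?_, ?_, ?_, ?_, ?_⟩
  · -- nonneg
    intro ω
    refine add_nonneg (Finset.sum_nonneg fun a _ => ?_) (Finset.sum_nonneg fun a _ => ?_)
    · split_ifs
      · exact hwreal0 a
      · exact le_rfl
    · split_ifs
      · exact hwdum0 a
      · exact le_rfl
  · -- sums to one
    rw [Finset.sum_add_distrib, push_sum Treal wreal Finset.univ,
      push_sum Tdum wdum Finset.univ]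
    simp only [Finset.mem_univ, if_true]
    rw [hrealtotal, hdumtotal, hρdef]
    ring
  · -- validity
    intro ω hω
    replace hω : (∑ a, if Treal a = ω then wreal a else 0)
        + (∑ a, if Tdum a = ω then wdum a else 0) ≠ 0 := hω
    have hsplit : (∑ a, if Treal a = ω then wreal a else 0) ≠ 0 ∨
        (∑ a, if Tdum a = ω then wdum a else 0) ≠ 0 := by
      by_contra h
      push_neg at h
      exact hω (by rw [h.1, h.2, add_zero])
    rcases hsplit with h | h
    · obtain ⟨a, _, ha⟩ := Finset.exists_ne_zero_of_sum_ne_zero h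
      have hTa : Treal a = ω := by
        by_contra hc
        rw [if_neg hc] at ha
        exact ha rfl
      rw [← hTa, hTreal]
      refine ⟨?_, hS0 a.1, hS1 a.1, ?_⟩
      · intro hcon
        have := e.injective hcon
        simp at this
      · intro a0 a1 a0' a1' h0 h1
        exact hout a.1 a0 a1 a0' a1' h0 h1
    · obtain ⟨a, _, ha⟩ := Finset.exists_ne_zero_of_sum_ne_zero h
      have hTa : Tdum a = ω := by
        by_contra hc
        rw [if_neg hc] at ha
        exact ha rfl
      rw [← hTa, hTdum]
      refine ⟨?_, hd0, hd1, ?_⟩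
      · intro hcon
        have := e.injective hcon
        simp at this
      · intro a0 a1 a0' a1' h0 h1
        rfl
  · -- correctness
    intro x
    rw [Finset.sum_add_distrib, push_sum, push_sum]
    simp only [Finset.mem_filter, Finset.mem_univ, true_and]
    have hreal_eq : ∀ a : Fin P.R × (Σ u : Fin t → Bool, Fin (n1 u))
        × (Σ u : Fin t → Bool, Fin (n2 u)),
        (if (Treal a).f (C x (Treal a).j0) (C x (Treal a).j1) = x i then wreal a else 0)
        = if P.q1 i a.1 = a.2.1.1 ∧ P.q2 i a.1 = a.2.2.1 then
            ((if P.out i a.1 (P.ans1 x (P.q1 i a.1)) (P.ans2 x (P.q2 i a.1)) = x i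
              then P.pr a.1 * κ a.1 else 0) / (n1 a.2.1.1 : ℝ)) / (n2 a.2.2.1 : ℝ)
          else 0 := by
      intro a
      simp only [hTreal, hwreal]
      rw [hC1, hC2]
      by_cases hc : P.q1 i a.1 = a.2.1.1 ∧ P.q2 i a.1 = a.2.2.1
      · rw [if_pos hc, if_pos hc, ← hc.1, ← hc.2]
        by_cases h3 : P.out i a.1 (P.ans1 x (P.q1 i a.1)) (P.ans2 x (P.q2 i a.1)) = x i
        · rw [if_pos h3, if_pos h3]
        · rw [if_neg h3, if_neg h3, zero_div, zero_div]
      · rw [if_neg hc, if_neg hc, ite_self]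
    have hrealsum : ∑ a, (if (Treal a).f (C x (Treal a).j0) (C x (Treal a).j1) = x i
        then wreal a else 0)
        = ∑ r ∈ Finset.univ.filter
            (fun r => P.out i r (P.ans1 x (P.q1 i r)) (P.ans2 x (P.q2 i r)) = x i),
            P.pr r * κ r := by
      rw [Finset.sum_congr rfl fun a _ => hreal_eq a, Finset.sum_filter]
      exact triple_collapse n1 n2 hn1 hn2 (fun r => P.q1 i r) (fun r => P.q2 i r)
        (fun r => if P.out i r (P.ans1 x (P.q1 i r)) (P.ans2 x (P.q2 i r)) = x i
          then P.pr r * κ r else 0)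
    have hdum_eq : ∀ a : (Σ u : Fin t → Bool, Fin (n1 u))
        × (Σ u : Fin t → Bool, Fin (n2 u)) × Bool,
        (if (Tdum a).f (C x (Tdum a).j0) (C x (Tdum a).j1) = x i then wdum a else 0)
        = if a.2.2 = x i then wdum a else 0 := by
      intro a
      by_cases h : a.2.2 = x i
      · simp only [hTdum, if_pos h]
      · simp only [hTdum, if_neg h]
    have hdumsum : ∑ a, (if (Tdum a).f (C x (Tdum a).j0) (C x (Tdum a).j1) = x i
        then wdum a else 0) = ρ / 2 := by
      calc ∑ a, (if (Tdum a).f (C x (Tdum a).j0) (C x (Tdum a).j1) = x i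
          then wdum a else 0)
          = ∑ a, (if a.2.2 = x i then wdum a else 0) :=
            Finset.sum_congr rfl fun a _ => hdum_eq a
        _ = (∑ u, (ρ/2) * (room1 u / R1)) * (∑ u, room2 u / R2) := by
            rw [hwdum]
            exact dum_correct n1 n2 hn1 hn2 (fun u => (ρ/2) * (room1 u / R1))
              (fun u => room2 u / R2) (x i)
        _ = ((ρ/2) * (R1/R1)) * (R2/R2) := by rw [hs1, hs2]
        _ = (1/2) * ρ * (R1/R1) * (R2/R2) := by ring
        _ = (1/2) * ρ := hfix (1/2)
        _ = ρ / 2 := by ring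
    rw [hrealsum, hdumsum]
    have h1 : ∑ r ∈ Finset.univ.filter
        (fun r => P.out i r (P.ans1 x (P.q1 i r)) (P.ans2 x (P.q2 i r)) = x i),
        (P.pr r - P.pr r * κ r) ≤ ∑ r, (P.pr r - P.pr r * κ r) :=
      Finset.sum_le_sum_of_subset_of_nonneg (Finset.filter_subset _ _)
        (fun r _ _ => by
          have h := mul_nonneg (hpr0 r) (show (0:ℝ) ≤ 1 - κ r by linarith [(hκ01 r).2])
          nlinarith)
    have h2 : ∑ r, (P.pr r - P.pr r * κ r) = ρ := by
      rw [Finset.sum_sub_distrib, hpr1, ← hKdef]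
    have h3 : ∑ r ∈ Finset.univ.filter
        (fun r => P.out i r (P.ans1 x (P.q1 i r)) (P.ans2 x (P.q2 i r)) = x i),
        (P.pr r - P.pr r * κ r)
        = (∑ r ∈ Finset.univ.filter
            (fun r => P.out i r (P.ans1 x (P.q1 i r)) (P.ans2 x (P.q2 i r)) = x i), P.pr r)
          - ∑ r ∈ Finset.univ.filter
            (fun r => P.out i r (P.ans1 x (P.q1 i r)) (P.ans2 x (P.q2 i r)) = x i),
            P.pr r * κ r := Finset.sum_sub_distrib _ _
    have h4 := hcor x
    linarith [hρ2η]
  · -- smoothness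
    intro j
    rw [Finset.sum_add_distrib, push_sum, push_sum]
    simp only [Finset.mem_filter, Finset.mem_univ, true_and]
    have hsplitR : ∑ a, (if (Treal a).j0 = j ∨ (Treal a).j1 = j then wreal a else 0)
        ≤ (∑ a, if (Treal a).j0 = j then wreal a else 0)
          + (∑ a, if (Treal a).j1 = j then wreal a else 0) := by
      rw [← Finset.sum_add_distrib]
      exact Finset.sum_le_sum fun a _ => ite_or_le (hwreal0 a)
    have hsplitD : ∑ a, (if (Tdum a).j0 = j ∨ (Tdum a).j1 = j then wdum a else 0)
        ≤ (∑ a, if (Tdum a).j0 = j then wdum a else 0)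
          + (∑ a, if (Tdum a).j1 = j then wdum a else 0) := by
      rw [← Finset.sum_add_distrib]
      exact Finset.sum_le_sum fun a _ => ite_or_le (hwdum0 a)
    cases hj : e.symm j with
    | inl σ =>
      have hne2 : ∀ s2 : (Σ u : Fin t → Bool, Fin (n2 u)), e (Sum.inr s2) ≠ j := by
        intro s2 h
        rw [Equiv.apply_eq_iff_eq_symm_apply, hj] at h
        cases h
      have hiff1 : ∀ s1 : (Σ u : Fin t → Bool, Fin (n1 u)),
          (e (Sum.inl s1) = j) = (s1 = σ) := by
        intro s1
        rw [Equiv.apply_eq_iff_eq_symm_apply, hj]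
        simp
      have hA1 : ∑ a, (if (Treal a).j0 = j then wreal a else 0)
          = M1 σ.1 / (n1 σ.1 : ℝ) := by
        simp only [hTreal, hwreal, hiff1]
        rw [hM1def]
        exact real_pos1 n1 n2 hn1 hn2 (fun r => P.q1 i r) (fun r => P.q2 i r)
          (fun r => P.pr r * κ r) σ
      have hA2 : ∑ a, (if (Treal a).j1 = j then wreal a else 0) = 0 := by
        simp only [hTreal]
        exact Finset.sum_eq_zero fun a _ => if_neg (hne2 a.2.2)
      have hB1 : ∑ a, (if (Tdum a).j0 = j then wdum a else 0)
          = ((ρ/2) * (room1 σ.1 / R1) / (n1 σ.1 : ℝ)) * (2 * (R2/R2)) := by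
        simp only [hTdum, hwdum, hiff1]
        have h := dum_pos1 n1 n2 hn1 hn2 (fun u => (ρ/2) * (room1 u / R1))
          (fun u => room2 u / R2) σ
        rw [hs2] at h
        exact h
      have hB2 : ∑ a, (if (Tdum a).j1 = j then wdum a else 0) = 0 := by
        simp only [hTdum]
        exact Finset.sum_eq_zero fun a _ => if_neg (hne2 a.2.1)
      have hbd : ((ρ/2) * (room1 σ.1 / R1) / (n1 σ.1 : ℝ)) * (2 * (R2/R2))
          ≤ room1 σ.1 / (n1 σ.1 : ℝ) := by
        rcases eq_or_lt_of_le hρ0 with h | h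
        · have h0 : ((ρ/2) * (room1 σ.1 / R1) / (n1 σ.1 : ℝ)) * (2 * (R2/R2)) = 0 := by
            rw [← h]; ring
          rw [h0]
          exact div_nonneg (hroom1_0 σ.1) (Nat.cast_nonneg _)
        · have hR1p : 0 < R1 := lt_of_lt_of_le h hR1ρ
          have hR2p : 0 < R2 := lt_of_lt_of_le h hR2ρ
          rw [div_self hR2p.ne']
          have heq : ((ρ/2) * (room1 σ.1 / R1) / (n1 σ.1 : ℝ)) * (2 * 1)
              = (room1 σ.1 / (n1 σ.1 : ℝ)) * (ρ / R1) := by ring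
          rw [heq]
          exact mul_le_of_le_one_right (div_nonneg (hroom1_0 σ.1) (Nat.cast_nonneg _))
            ((div_le_one hR1p).mpr hR1ρ)
      have hfin : M1 σ.1 / (n1 σ.1 : ℝ) + room1 σ.1 / (n1 σ.1 : ℝ) = 3 / (m:ℝ) := by
        rw [← add_div]
        have h1 : M1 σ.1 + room1 σ.1 = c1 σ.1 := by
          simp only [hroom1def]; ring
        rw [h1]
        simp only [hc1def]
        exact mul_div_cancel_left₀ _ (Nat.cast_ne_zero.mpr (hn1 σ.1).ne')
      linarith [hsplitR, hsplitD]
    | inr σ =>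
      have hne1 : ∀ s1 : (Σ u : Fin t → Bool, Fin (n1 u)), e (Sum.inl s1) ≠ j := by
        intro s1 h
        rw [Equiv.apply_eq_iff_eq_symm_apply, hj] at h
        cases h
      have hiff2 : ∀ s2 : (Σ u : Fin t → Bool, Fin (n2 u)),
          (e (Sum.inr s2) = j) = (s2 = σ) := by
        intro s2
        rw [Equiv.apply_eq_iff_eq_symm_apply, hj]
        simp
      have hA1 : ∑ a, (if (Treal a).j0 = j then wreal a else 0) = 0 := by
        simp only [hTreal]
        exact Finset.sum_eq_zero fun a _ => if_neg (hne1 a.2.1)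
      have hA2 : ∑ a, (if (Treal a).j1 = j then wreal a else 0)
          = M2 σ.1 / (n2 σ.1 : ℝ) := by
        simp only [hTreal, hwreal, hiff2]
        rw [hM2def]
        exact real_pos2 n1 n2 hn1 hn2 (fun r => P.q1 i r) (fun r => P.q2 i r)
          (fun r => P.pr r * κ r) σ
      have hB1 : ∑ a, (if (Tdum a).j0 = j then wdum a else 0) = 0 := by
        simp only [hTdum]
        exact Finset.sum_eq_zero fun a _ => if_neg (hne1 a.1)
      have hB2 : ∑ a, (if (Tdum a).j1 = j then wdum a else 0)
          = ((ρ/2) * (R1/R1)) * (2 * (room2 σ.1 / R2 / (n2 σ.1 : ℝ))) := by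
        simp only [hTdum, hwdum, hiff2]
        have h := dum_pos2 n1 n2 hn1 hn2 (fun u => (ρ/2) * (room1 u / R1))
          (fun u => room2 u / R2) σ
        rw [hs1] at h
        exact h
      have hbd : ((ρ/2) * (R1/R1)) * (2 * (room2 σ.1 / R2 / (n2 σ.1 : ℝ)))
          ≤ room2 σ.1 / (n2 σ.1 : ℝ) := by
        rcases eq_or_lt_of_le hρ0 with h | h
        · have h0 : ((ρ/2) * (R1/R1)) * (2 * (room2 σ.1 / R2 / (n2 σ.1 : ℝ))) = 0 := by
            rw [← h]; ring
          rw [h0]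
          exact div_nonneg (hroom2_0 σ.1) (Nat.cast_nonneg _)
        · have hR1p : 0 < R1 := lt_of_lt_of_le h hR1ρ
          have hR2p : 0 < R2 := lt_of_lt_of_le h hR2ρ
          rw [div_self hR1p.ne']
          have heq : ((ρ/2) * 1) * (2 * (room2 σ.1 / R2 / (n2 σ.1 : ℝ)))
              = (room2 σ.1 / (n2 σ.1 : ℝ)) * (ρ / R2) := by ring
          rw [heq]
          exact mul_le_of_le_one_right (div_nonneg (hroom2_0 σ.1) (Nat.cast_nonneg _))
            ((div_le_one hR2p).mpr hR2ρ)
      have hfin : M2 σ.1 / (n2 σ.1 : ℝ) + room2 σ.1 / (n2 σ.1 : ℝ) = 3 / (m:ℝ) := by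
        rw [← add_div]
        have h1 : M2 σ.1 + room2 σ.1 = c2 σ.1 := by
          simp only [hroom2def]; ring
        rw [h1]
        simp only [hc2def]
        exact mul_div_cancel_left₀ _ (Nat.cast_ne_zero.mpr (hn2 σ.1).ne')
      linarith [hsplitR, hsplitD]

set_option maxHeartbeats 1000000 in
/-- GKST reduction: from a one-round, `(1-η)`-secure, 2-server PIR
scheme with `n`-bit databases, `t`-bit queries, `ℓ`-bit answers, recovery probability
`1/2 + ε`, using `b` bits, one obtains a `(2, 3, ε-η)`-smooth code
`C : {0,1}^n → ({0,1}^ℓ)^m` using `b` bits, with `m ≤ 6·2^t`. -/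
theorem stmt14 (n t ℓ b : ℕ) (η ε : ℝ) (P : PIRScheme n t ℓ)
    (hP : P.ProbDist) (hcor : P.Correct ε) (hsec : P.Secure η)
    (hb : P.UsesBits b) :
    ∃ m : ℕ, m ≤ 6 * 2 ^ t ∧
      ∃ C : (Fin n → Bool) → Fin m → Fin ℓ → Bool,
        IsSmoothCode n m ℓ b 3 (ε - η) C := by
  classical
  obtain ⟨hpr0, hpr1⟩ := hP
  rcases Nat.eq_zero_or_pos n with hn | hn
  · exact ⟨0, Nat.zero_le _, fun _ j => j.elim0, fun i => absurd i.isLt (by omega)⟩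
  have hps : (2:ℝ)^(t+1) = 2 * 2^t := by rw [pow_succ]; ring
  set p1 : (Fin t → Bool) → ℝ :=
    fun u => ∑ r ∈ Finset.univ.filter (fun r => P.q1 ⟨0, hn⟩ r = u), P.pr r with hp1def
  set p2 : (Fin t → Bool) → ℝ :=
    fun u => ∑ r ∈ Finset.univ.filter (fun r => P.q2 ⟨0, hn⟩ r = u), P.pr r with hp2def
  have hp1_0 : ∀ u, 0 ≤ p1 u := fun u => Finset.sum_nonneg fun r _ => hpr0 r
  have hp2_0 : ∀ u, 0 ≤ p2 u := fun u => Finset.sum_nonneg fun r _ => hpr0 r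
  have hp1sum : ∑ u, p1 u = 1 := by
    have h := fiber_sum (fun r => P.q1 ⟨0, hn⟩ r) P.pr (fun _ => (1:ℝ))
    simpa [hp1def] using h.trans (by simpa using hpr1)
  have hp2sum : ∑ u, p2 u = 1 := by
    have h := fiber_sum (fun r => P.q2 ⟨0, hn⟩ r) P.pr (fun _ => (1:ℝ))
    simpa [hp2def] using h.trans (by simpa using hpr1)
  set n1 : (Fin t → Bool) → ℕ := fun u => max 1 ⌈(2:ℝ)^(t+1) * p1 u⌉₊ with hn1def
  set n2 : (Fin t → Bool) → ℕ := fun u => max 1 ⌈(2:ℝ)^(t+1) * p2 u⌉₊ with hn2def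
  have hn1pos : ∀ u, 0 < n1 u := fun u => lt_of_lt_of_le one_pos (le_max_left _ _)
  have hn2pos : ∀ u, 0 < n2 u := fun u => lt_of_lt_of_le one_pos (le_max_left _ _)
  have hn1ge : ∀ u, (2:ℝ)^(t+1) * p1 u ≤ (n1 u : ℝ) := by
    intro u
    calc (2:ℝ)^(t+1) * p1 u ≤ (⌈(2:ℝ)^(t+1) * p1 u⌉₊ : ℝ) := Nat.le_ceil _
      _ ≤ (n1 u : ℝ) := by
          simp only [hn1def]
          exact_mod_cast le_max_right 1 ⌈(2:ℝ)^(t+1) * p1 u⌉₊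
  have hn2ge : ∀ u, (2:ℝ)^(t+1) * p2 u ≤ (n2 u : ℝ) := by
    intro u
    calc (2:ℝ)^(t+1) * p2 u ≤ (⌈(2:ℝ)^(t+1) * p2 u⌉₊ : ℝ) := Nat.le_ceil _
      _ ≤ (n2 u : ℝ) := by
          simp only [hn2def]
          exact_mod_cast le_max_right 1 ⌈(2:ℝ)^(t+1) * p2 u⌉₊
  have hn1le : ∀ u, (n1 u : ℝ) ≤ (2:ℝ)^(t+1) * p1 u + 1 := by
    intro u
    have h0 : (0:ℝ) ≤ (2:ℝ)^(t+1) * p1 u := mul_nonneg (by positivity) (hp1_0 u)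
    have hceil : (⌈(2:ℝ)^(t+1) * p1 u⌉₊ : ℝ) < (2:ℝ)^(t+1) * p1 u + 1 :=
      Nat.ceil_lt_add_one h0
    simp only [hn1def]
    rw [Nat.cast_max]
    apply max_le
    · push_cast
      linarith
    · linarith
  have hn2le : ∀ u, (n2 u : ℝ) ≤ (2:ℝ)^(t+1) * p2 u + 1 := by
    intro u
    have h0 : (0:ℝ) ≤ (2:ℝ)^(t+1) * p2 u := mul_nonneg (by positivity) (hp2_0 u)
    have hceil : (⌈(2:ℝ)^(t+1) * p2 u⌉₊ : ℝ) < (2:ℝ)^(t+1) * p2 u + 1 :=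
      Nat.ceil_lt_add_one h0
    simp only [hn2def]
    rw [Nat.cast_max]
    apply max_le
    · push_cast
      linarith
    · linarith
  have hcard : ∑ _u : Fin t → Bool, (1:ℝ) = 2^t := by
    rw [Finset.sum_const, Finset.card_univ]
    simp [Fintype.card_fun]
  have hm1le : ∑ u, (n1 u : ℝ) ≤ 3 * 2^t := by
    calc ∑ u, (n1 u : ℝ) ≤ ∑ u, ((2:ℝ)^(t+1) * p1 u + 1) :=
          Finset.sum_le_sum fun u _ => hn1le u
      _ = (2:ℝ)^(t+1) * ∑ u, p1 u + ∑ _u : Fin t → Bool, (1:ℝ) := by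
          rw [Finset.sum_add_distrib, Finset.mul_sum]
      _ = 2 * 2^t + 2^t := by rw [hp1sum, hcard, hps]; ring
      _ = 3 * 2^t := by ring
  have hm2le : ∑ u, (n2 u : ℝ) ≤ 3 * 2^t := by
    calc ∑ u, (n2 u : ℝ) ≤ ∑ u, ((2:ℝ)^(t+1) * p2 u + 1) :=
          Finset.sum_le_sum fun u _ => hn2le u
      _ = (2:ℝ)^(t+1) * ∑ u, p2 u + ∑ _u : Fin t → Bool, (1:ℝ) := by
          rw [Finset.sum_add_distrib, Finset.mul_sum]
      _ = 2 * 2^t + 2^t := by rw [hp2sum, hcard, hps]; ring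
      _ = 3 * 2^t := by ring
  have hm1ge : (2:ℝ)^(t+1) ≤ ∑ u, (n1 u : ℝ) := by
    calc (2:ℝ)^(t+1) = (2:ℝ)^(t+1) * ∑ u, p1 u := by rw [hp1sum]; ring
      _ = ∑ u, (2:ℝ)^(t+1) * p1 u := Finset.mul_sum _ _ _
      _ ≤ ∑ u, (n1 u : ℝ) := Finset.sum_le_sum fun u _ => hn1ge u
  have hm2ge : (2:ℝ)^(t+1) ≤ ∑ u, (n2 u : ℝ) := by
    calc (2:ℝ)^(t+1) = (2:ℝ)^(t+1) * ∑ u, p2 u := by rw [hp2sum]; ring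
      _ = ∑ u, (2:ℝ)^(t+1) * p2 u := Finset.mul_sum _ _ _
      _ ≤ ∑ u, (n2 u : ℝ) := Finset.sum_le_sum fun u _ => hn2ge u
  set m : ℕ := Fintype.card
    ((Σ u : Fin t → Bool, Fin (n1 u)) ⊕ (Σ u : Fin t → Bool, Fin (n2 u))) with hmdef
  have hcardM : m = (∑ u, n1 u) + (∑ u, n2 u) := by
    rw [hmdef]
    simp [Fintype.card_sum, Fintype.card_sigma]
  have hmcast : (m : ℝ) = (∑ u, (n1 u : ℝ)) + (∑ u, (n2 u : ℝ)) := by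
    rw [hcardM]
    push_cast
    ring
  have hmle : (m : ℝ) ≤ 6 * 2^t := by rw [hmcast]; linarith
  have hm6 : m ≤ 6 * 2^t := by
    have h6 : ((6 * 2^t : ℕ) : ℝ) = 6 * 2^t := by push_cast; ring
    exact_mod_cast hmle.trans h6.symm.le
  have hm3 : (m : ℝ) ≤ 3 * 2^(t+1) := by rw [hps]; linarith
  have hm0' : (0:ℝ) < m := by
    have : 0 < m := by
      rw [hmdef]
      exact @Fintype.card_pos _ _ ⟨Sum.inl ⟨default, ⟨0, hn1pos default⟩⟩⟩
    exact_mod_cast this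
  have hbig1 : (m : ℝ) ≤ 3 * ∑ u, (n1 u : ℝ) := by
    rw [hmcast]
    have : ∑ u, (n2 u : ℝ) ≤ 2 * ∑ u, (n1 u : ℝ) := by
      calc ∑ u, (n2 u : ℝ) ≤ 3 * 2^t := hm2le
        _ ≤ 2 * (2:ℝ)^(t+1) := by rw [hps]; linarith [pow_pos (show (0:ℝ) < 2 by norm_num) t]
        _ ≤ 2 * ∑ u, (n1 u : ℝ) := by linarith
    linarith
  have hbig2 : (m : ℝ) ≤ 3 * ∑ u, (n2 u : ℝ) := by
    rw [hmcast]
    have : ∑ u, (n1 u : ℝ) ≤ 2 * ∑ u, (n2 u : ℝ) := by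
      calc ∑ u, (n1 u : ℝ) ≤ 3 * 2^t := hm1le
        _ ≤ 2 * (2:ℝ)^(t+1) := by rw [hps]; linarith [pow_pos (show (0:ℝ) < 2 by norm_num) t]
        _ ≤ 2 * ∑ u, (n2 u : ℝ) := by linarith
    linarith
  have hcap1 : ∀ u, p1 u ≤ (n1 u : ℝ) * (3 / m) := by
    intro u
    have h1 : p1 u ≤ (n1 u : ℝ) / 2^(t+1) := by
      rw [le_div_iff₀ (by positivity), mul_comm]
      exact hn1ge u
    have hx : (1:ℝ)/2^(t+1) ≤ 3/(m:ℝ) := by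
      rw [div_le_div_iff₀ (by positivity) hm0']
      linarith
    calc p1 u ≤ (n1 u : ℝ) / 2^(t+1) := h1
      _ = (n1 u : ℝ) * (1/2^(t+1)) := by ring
      _ ≤ (n1 u : ℝ) * (3/m) := mul_le_mul_of_nonneg_left hx (Nat.cast_nonneg _)
  have hcap2 : ∀ u, p2 u ≤ (n2 u : ℝ) * (3 / m) := by
    intro u
    have h1 : p2 u ≤ (n2 u : ℝ) / 2^(t+1) := by
      rw [le_div_iff₀ (by positivity), mul_comm]
      exact hn2ge u
    have hx : (1:ℝ)/2^(t+1) ≤ 3/(m:ℝ) := by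
      rw [div_le_div_iff₀ (by positivity) hm0']
      linarith
    calc p2 u ≤ (n2 u : ℝ) / 2^(t+1) := h1
      _ = (n2 u : ℝ) * (1/2^(t+1)) := by ring
      _ ≤ (n2 u : ℝ) * (3/m) := mul_le_mul_of_nonneg_left hx (Nat.cast_nonneg _)
  choose S0f S1f hS0 hS1 houtf using hb
  have hrne : (Finset.univ : Finset (Fin P.R)).Nonempty :=
    Finset.nonempty_of_sum_ne_zero (by rw [hpr1]; norm_num)
  obtain ⟨r0, -⟩ := hrne
  refine ⟨m, hm6, fun x j => Sum.elim (fun s => P.ans1 x s.1) (fun s => P.ans2 x s.1)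
    ((Fintype.equivFin ((Σ u : Fin t → Bool, Fin (n1 u))
      ⊕ (Σ u : Fin t → Bool, Fin (n2 u)))).symm j), ?_⟩
  intro i
  exact decoder_exists P η ε hpr0 hpr1 i m hm3 n1 n2 hn1pos hn2pos hbig1 hbig2
    (Fintype.equivFin _) _
    (fun x s => by simp) (fun x s => by simp)
    p1 p2 hp1sum hp2sum hcap1 hcap2
    ((hsec i ⟨0, hn⟩).1) ((hsec i ⟨0, hn⟩).2)
    (fun x => hcor x i)
    (S0f i) (S1f i) (hS0 i) (hS1 i) (houtf i)
    (S0f i r0) (S1f i r0) (hS0 i r0) (hS1 i r0)
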